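/- arXiv:2405.06475 — 3 statements merged into one kernel-verified Lean document; each statement's English description precedes it below -/
import Mathlib

section
/- Let R be a commutative ring and D an additive R-linear category with weak kernels. Let M : D → Mod-R be a contravariant functor which is a subfunctor of a representable functor (i.e. there is a natural monomorphism M → D(-,D) for some object D of D). Then the kernel of every natural transformation D(-,C) → M (for any object C of D) is a finitely generated D-module. Consequently, M is finitely presented if and only if M is finitely generated. -/
/-!
Statement 0.
Let `R` be a commutative ring and `D` an additive `R`-linear category with weak kernels.
Let `M : D → Mod-R` be a contravariant (`R`-linear) functor which is a subfunctor of a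
representable functor.  Then the kernel of every natural transformation `D(-,C) → M` is a
finitely generated `D`-module.  Consequently, `M` is finitely presented iff it is finitely
generated.
-/

open CategoryTheory Opposite

universe w v u

namespace Paper

variable (R : Type w) [CommRing R] (D : Type u) [Category.{v} D] [Preadditive D]
  [CategoryTheory.Linear R D]

instance oppositeHomModule (X Y : Dᵒᵖ) : Module R (X ⟶ Y) where
  smul r f := (r • f.unop).op
  one_smul f := Quiver.Hom.unop_inj (one_smul _ _)
  mul_smul r s f := Quiver.Hom.unop_inj (mul_smul _ _ _)
  smul_zero r := Quiver.Hom.unop_inj (smul_zero _)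
  smul_add r f g := Quiver.Hom.unop_inj (smul_add _ _ _)
  add_smul r s f := Quiver.Hom.unop_inj (add_smul _ _ _)
  zero_smul f := Quiver.Hom.unop_inj (zero_smul _ _)

instance oppositeLinear : CategoryTheory.Linear R Dᵒᵖ where
  smul_comp X Y Z r f g := by
    exact Quiver.Hom.unop_inj (CategoryTheory.Linear.comp_smul _ _ _ g.unop r f.unop)
  comp_smul X Y Z f r g := by
    exact Quiver.Hom.unop_inj (CategoryTheory.Linear.smul_comp _ _ _ r g.unop f.unop)

variable {D}

/-- `D` has weak kernels:  every morphism `g : Y ⟶ Z` admits `f : X ⟶ Y` such that the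
sequence of functors `D(-,X) → D(-,Y) → D(-,Z)` is exact. -/
def HasWeakKernels : Prop :=
  ∀ ⦃Y Z : D⦄ (g : Y ⟶ Z), ∃ (X : D) (f : X ⟶ Y),
    ∀ (W : D) (w : W ⟶ Y), w ≫ g = 0 ↔ ∃ t : W ⟶ X, t ≫ f = w

/-- A `D`-module `M` is finitely generated if there is a natural epimorphism
`D(-,D₀) → M`. -/
def IsFinitelyGenerated (M : Dᵒᵖ ⥤ ModuleCat.{v} R) : Prop :=
  ∃ (D₀ : D) (α : (linearYoneda R D).obj D₀ ⟶ M),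
    ∀ X : Dᵒᵖ, Function.Surjective (α.app X)

/-- A `D`-module `M` is finitely presented if there is an exact sequence of functors
`D(-,C₀) → D(-,D₀) → M → 0`. -/
def IsFinitelyPresented (M : Dᵒᵖ ⥤ ModuleCat.{v} R) : Prop :=
  ∃ (C₀ D₀ : D) (f : C₀ ⟶ D₀) (α : (linearYoneda R D).obj D₀ ⟶ M),
    (∀ X : Dᵒᵖ, Function.Surjective (α.app X)) ∧
    (∀ X : Dᵒᵖ, Function.Exact (((linearYoneda R D).map f).app X) (α.app X))

/-- The kernel of `α : D(-,C₀) → M` is a finitely generated `D`-module, i.e. there exist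
`B` and `g : B ⟶ C₀` such that `D(-,B) → D(-,C₀) → M` is exact (equivalently the image
of `D(-,B) → D(-,C₀)` is exactly the kernel of `α`). -/
def KernelIsFinitelyGenerated {M : Dᵒᵖ ⥤ ModuleCat.{v} R} {C₀ : D}
    (α : (linearYoneda R D).obj C₀ ⟶ M) : Prop :=
  ∃ (B : D) (g : B ⟶ C₀),
    ∀ X : Dᵒᵖ, Function.Exact (((linearYoneda R D).map g).app X) (α.app X)

theorem kernels_fg_of_subfunctor_of_representable
    (hwk : HasWeakKernels (D := D))
    (M : Dᵒᵖ ⥤ ModuleCat.{v} R) [M.Additive] [M.Linear R]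
    (D₀ : D) (ι : M ⟶ (linearYoneda R D).obj D₀)
    (hι : ∀ X : Dᵒᵖ, Function.Injective (ι.app X)) :
    (∀ (C₀ : D) (α : (linearYoneda R D).obj C₀ ⟶ M), KernelIsFinitelyGenerated R α) ∧
    (IsFinitelyPresented R M ↔ IsFinitelyGenerated R M) := by

  have key : ∀ (C₀ : D) (α : (linearYoneda R D).obj C₀ ⟶ M), KernelIsFinitelyGenerated R α := by
    intro C₀ α
    set β := α ≫ ι with hβ
    set g : C₀ ⟶ D₀ := β.app (op C₀) (𝟙 C₀) with hg
    have hβeq : ∀ (X : Dᵒᵖ) (w : X.unop ⟶ C₀), β.app X w = w ≫ g := by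
      intro X w
      have := congrArg (fun m => m (𝟙 C₀)) (β.naturality w.op)
      rw [hg]; have h' : β.app X (w ≫ 𝟙 C₀) = w ≫ β.app (op C₀) (𝟙 C₀) := this; rw [Category.comp_id] at h'; exact h'
    obtain ⟨B, f, hf⟩ := hwk g
    refine ⟨B, f, fun X => ?_⟩
    intro (v : X.unop ⟶ C₀)
    have h1 : α.app X v = 0 ↔ β.app X v = 0 := by
      constructor
      · intro h
        have h2 : (ι.app X) ((α.app X) v) = 0 := by rw [h]; simp
        exact h2
      · intro h
        apply hι X
        rw [hβ] at h
        rw [map_zero]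
        exact h
    have h2 : β.app X v = 0 ↔ v ≫ g = 0 := by rw [hβeq X v]; rfl
    rw [h1, h2, hf X.unop v]
    constructor
    · rintro ⟨t, ht⟩
      exact ⟨t, ht⟩
    · rintro ⟨t, ht⟩
      exact ⟨t, ht⟩
  refine ⟨key, ?_, ?_⟩
  · rintro ⟨C₀, D₁, f, α, hsurj, _⟩
    exact ⟨D₁, α, hsurj⟩
  · rintro ⟨D₁, α, hsurj⟩
    obtain ⟨B, g, hg⟩ := key D₁ α
    exact ⟨B, D₁, g, α, hsurj, hg⟩


end Paper
end

section
/- Let R be a commutative ring and D an R-linear triangulated category. Every suspended karoubian full subcategory S of D (i.e. S is closed under extensions, under the shift [1], and under direct summands, and idempotents in S split) which is precovering in D is coreflective: the inclusion S → D has a right adjoint. -/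
/-!
Statement 5.
Let `R` be a commutative ring and `D` an `R`-linear triangulated category.  Every suspended
karoubian full subcategory `S` of `D` (closed under extensions, under the shift `[1]`, and
under direct summands, with idempotents in `S` splitting) which is precovering in `D` is
coreflective: the inclusion `S → D` has a right adjoint.
-/

open CategoryTheory CategoryTheory.Limits CategoryTheory.Pretriangulated Opposite

universe w v u

namespace Paper

variable {R : Type w} [CommRing R] {D : Type u} [Category.{v} D] [Preadditive D]
  [CategoryTheory.Linear R D] [HasZeroObject D] [HasShift D ℤ]
  [∀ n : ℤ, (shiftFunctor D n).Additive] [Pretriangulated D]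

/-- Auxiliary: pointwise existence of a coreflection. -/
lemma exists_coreflection_aux
    (S : D → Prop)
    (hshift : ∀ X : D, S X → S (X⟦(1 : ℤ)⟧))
    (hext : ∀ T : Pretriangulated.Triangle D, T ∈ (distTriang D) →
      S T.obj₁ → S T.obj₃ → S T.obj₂)
    (hkar : ∀ X : D, S X → ∀ e : X ⟶ X, e ≫ e = e →
      ∃ (Y : D) (_ : S Y) (p : X ⟶ Y) (i : Y ⟶ X), p ≫ i = e ∧ i ≫ p = 𝟙 Y)
    (hprecover : ∀ D₀ : D, ∃ (S₀ : D) (_ : S S₀) (p : S₀ ⟶ D₀),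
      ∀ (X : D), S X → ∀ u : X ⟶ D₀, ∃ v : X ⟶ S₀, v ≫ p = u)
    (D₀ : D) :
    ∃ (Y : D) (_ : S Y) (c : Y ⟶ D₀),
      ∀ X : D, S X → Function.Bijective (fun w : X ⟶ Y => w ≫ c) := by
  obtain ⟨S₀, hS₀, g₀, hg₀⟩ := hprecover D₀
  obtain ⟨K, k, h, hT₀⟩ := Pretriangulated.distinguished_cocone_triangle₁ g₀
  have hk : k ≫ g₀ = 0 := comp_distTriang_mor_zero₁₂ _ hT₀
  obtain ⟨S₁, hS₁, g₁, hg₁⟩ := hprecover K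
  obtain ⟨C, q, r, hT₁⟩ := Pretriangulated.distinguished_cocone_triangle (g₁ ≫ k)
  have hsq : (g₁ ≫ k) ≫ q = 0 := comp_distTriang_mor_zero₁₂ _ hT₁
  have hC : S C := hext _ (rot_of_distTriang _ hT₁) hS₀ (hshift _ hS₁)
  obtain ⟨c, hc⟩ : ∃ c : C ⟶ D₀, g₀ = q ≫ c := Triangle.yoneda_exact₂ _ hT₁ g₀ (by
    show (g₁ ≫ k) ≫ g₀ = 0
    rw [Category.assoc, hk, Limits.comp_zero])
  -- `hc : g₀ = q ≫ c`
  obtain ⟨v, hv⟩ := hg₀ C hC c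
  -- key: anything into `C` killed by `c` is killed by `v ≫ q`
  have key : ∀ (X : D), S X → ∀ z : X ⟶ C, z ≫ c = 0 → z ≫ v ≫ q = 0 := by
    intro X hX z hz
    have hz' : (z ≫ v) ≫ g₀ = 0 := by rw [Category.assoc, hv, hz]
    obtain ⟨z', hz''⟩ : ∃ z' : X ⟶ K, z ≫ v = z' ≫ k :=
      Triangle.coyoneda_exact₂ _ hT₀ (z ≫ v) hz'
    obtain ⟨w, hw⟩ := hg₁ X hX z'
    rw [← Category.assoc, hz'', ← hw, Category.assoc, Category.assoc,
      ← Category.assoc g₁ k q, hsq, Limits.comp_zero]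
  -- `q ≫ v ≫ q = q`
  have hq : q ≫ v ≫ q = q := by
    have h1 : (q ≫ v - 𝟙 S₀) ≫ g₀ = 0 := by
      rw [Preadditive.sub_comp, Category.assoc, hv, Category.id_comp, ← hc, sub_self]
    obtain ⟨z', hz''⟩ : ∃ z' : S₀ ⟶ K, q ≫ v - 𝟙 S₀ = z' ≫ k :=
      Triangle.coyoneda_exact₂ _ hT₀ _ h1
    obtain ⟨w, hw⟩ := hg₁ S₀ hS₀ z'
    have h3 : (q ≫ v - 𝟙 S₀) ≫ q = 0 := by
      rw [hz'', ← hw, Category.assoc, Category.assoc, ← Category.assoc g₁ k q, hsq,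
        Limits.comp_zero]
    rw [Preadditive.sub_comp, Category.id_comp, sub_eq_zero] at h3
    rw [← Category.assoc]
    exact h3
  have he : (v ≫ q) ≫ (v ≫ q) = v ≫ q := by
    rw [Category.assoc, hq]
  obtain ⟨Y, hY, p, i, hpi, hip⟩ := hkar C hC (v ≫ q) he
  refine ⟨Y, hY, i ≫ c, fun X hX => ⟨?_, ?_⟩⟩
  · -- injectivity
    intro w₁ w₂ hw
    replace hw : w₁ ≫ i ≫ c = w₂ ≫ i ≫ c := hw
    have hz : ((w₁ - w₂) ≫ i) ≫ c = 0 := by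
      rw [Category.assoc, Preadditive.sub_comp, hw, sub_self]
    have h0 : ((w₁ - w₂) ≫ i) ≫ v ≫ q = 0 := key X hX _ hz
    rw [← hpi] at h0
    have hi : i ≫ p ≫ i = i := by rw [← Category.assoc, hip, Category.id_comp]
    rw [Category.assoc, hi] at h0
    have : w₁ - w₂ = 0 := by
      have h4 := congrArg (fun t => t ≫ p) h0
      simpa only [Category.assoc, hip, Category.comp_id, Limits.zero_comp] using h4
    rw [← sub_eq_zero]
    exact this
  · -- surjectivity
    intro u
    obtain ⟨v', hv'⟩ := hg₀ X hX u
    refine ⟨v' ≫ q ≫ p, ?_⟩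
    show (v' ≫ q ≫ p) ≫ i ≫ c = u
    have hqc : q ≫ c = g₀ := hc.symm
    rw [Category.assoc, Category.assoc, ← Category.assoc p i c, hpi]
    -- goal : v' ≫ q ≫ (v ≫ q) ≫ c = u
    rw [show q ≫ (v ≫ q) ≫ c = g₀ by
      rw [← Category.assoc, ← Category.assoc, Category.assoc q v q, hq, hqc]]
    exact hv'

theorem coreflective_of_suspended_karoubian_precovering
    (S : D → Prop)
    -- `S` is closed under the shift `[1]`
    (hshift : ∀ X : D, S X → S (X⟦(1 : ℤ)⟧))
    -- `S` is closed under extensions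
    (hext : ∀ T : Pretriangulated.Triangle D, T ∈ (distTriang D) →
      S T.obj₁ → S T.obj₃ → S T.obj₂)
    -- `S` is closed under direct summands
    (hsmd : ∀ ⦃X Y : D⦄, S X → ∀ (s : Y ⟶ X) (r : X ⟶ Y), s ≫ r = 𝟙 Y → S Y)
    -- idempotents in `S` split
    (hkar : ∀ X : D, S X → ∀ e : X ⟶ X, e ≫ e = e →
      ∃ (Y : D) (_ : S Y) (p : X ⟶ Y) (i : Y ⟶ X), p ≫ i = e ∧ i ≫ p = 𝟙 Y)
    -- `S` is precovering
    (hprecover : ∀ D₀ : D, ∃ (S₀ : D) (_ : S S₀) (p : S₀ ⟶ D₀),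
      ∀ (X : D), S X → ∀ u : X ⟶ D₀, ∃ v : X ⟶ S₀, v ≫ p = u) :
    ∃ G : D ⥤ ObjectProperty.FullSubcategory S, Nonempty (ObjectProperty.ι S ⊣ G) := by
  have key := exists_coreflection_aux S hshift hext hkar hprecover
  choose Y hY c hbij using key
  let e : ∀ (X : ObjectProperty.FullSubcategory S) (D₀ : D),
      ((ObjectProperty.ι S).obj X ⟶ D₀) ≃ (X ⟶ (⟨Y D₀, hY D₀⟩ : ObjectProperty.FullSubcategory S)) :=
    fun X D₀ => (Equiv.ofBijective _ (hbij D₀ X.obj X.property)).symm.trans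
      { toFun := fun f => ObjectProperty.homMk f, invFun := fun g => g.hom,
        left_inv := fun _ => rfl, right_inv := fun _ => rfl }
  have hsymm : ∀ (X : ObjectProperty.FullSubcategory S) (D₀ : D)
      (z : X ⟶ (⟨Y D₀, hY D₀⟩ : ObjectProperty.FullSubcategory S)),
      (e X D₀).symm z = @CategoryStruct.comp D _ X.obj (Y D₀) D₀ z.hom (c D₀) :=
    fun X D₀ z => rfl
  have hcomp : ∀ (X' X : ObjectProperty.FullSubcategory S) (D₀ : D) (f : X' ⟶ X)
      (z : X ⟶ (⟨Y D₀, hY D₀⟩ : ObjectProperty.FullSubcategory S)),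
      @CategoryStruct.comp D _ X'.obj (Y D₀) D₀
          (@CategoryStruct.comp (ObjectProperty.FullSubcategory S) _ X' X ⟨Y D₀, hY D₀⟩ f z).hom (c D₀) =
        @CategoryStruct.comp D _ X'.obj X.obj D₀ f.hom
          (@CategoryStruct.comp D _ X.obj (Y D₀) D₀ z.hom (c D₀)) :=
    fun X' X D₀ f z => Category.assoc _ _ _
  have he : ∀ (X' X : ObjectProperty.FullSubcategory S) (D₀ : D) (f : X' ⟶ X)
      (g : (ObjectProperty.ι S).obj X ⟶ D₀),
      e X' D₀ ((ObjectProperty.ι S).map f ≫ g) = f ≫ e X D₀ g := by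
    intro X' X D₀ f g
    apply (e X' D₀).symm.injective
    rw [Equiv.symm_apply_apply, hsymm, hcomp X' X D₀ f ((e X D₀) g),
      ← hsymm X D₀ ((e X D₀) g), Equiv.symm_apply_apply]
    rfl
  exact ⟨Adjunction.rightAdjointOfEquiv e he, ⟨Adjunction.adjunctionOfEquivRight e he⟩⟩

end Paper
end

section
/- Let R be a commutative ring, D an R-linear triangulated category, M : D → Mod-R a cohomological contravariant functor, and A a full subcategory of D with A[1] = A. Suppose that M is A-finitely generated and that, for every object D of D, the kernel of every natural transformation D(-,D) → M is also A-finitely generated. Then M is A^{*n}-finitely generated for every n ≥ 1. -/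
open CategoryTheory CategoryTheory.Limits CategoryTheory.Pretriangulated Opposite

universe w v u

namespace Paper

variable (R : Type w) [CommRing R] {D : Type u} [Category.{v} D] [Preadditive D]
  [CategoryTheory.Linear R D] [HasZeroObject D] [HasShift D ℤ]
  [∀ n : ℤ, (shiftFunctor D n).Additive] [Pretriangulated D]

/-- `M : D → Mod-R` (contravariant) is cohomological. -/
def IsCohomological (M : Dᵒᵖ ⥤ ModuleCat.{v} R) : Prop :=
  ∀ T : Pretriangulated.Triangle D, T ∈ (distTriang D) →
    Function.Exact (M.map T.mor₂.op) (M.map T.mor₁.op)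

variable (D)

/-- the closure of a class of objects under direct summands -/
def smdClosure (A : Set D) : Set D :=
  {Y | ∃ X ∈ A, ∃ (s : Y ⟶ X) (r : X ⟶ Y), s ≫ r = 𝟙 Y}

/-- `A * B`: objects `Y` fitting in a triangle `X → Y → Z → X[1]` with `X ∈ A`, `Z ∈ B`. -/
def starSets (A B : Set D) : Set D :=
  {Y | ∃ (X Z : D) (_ : X ∈ A) (_ : Z ∈ B) (f : X ⟶ Y) (g : Y ⟶ Z)
    (h : Z ⟶ X⟦(1 : ℤ)⟧), Pretriangulated.Triangle.mk f g h ∈ (distTriang D)}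

/-- `starPow A n = A^{*n}` (for `n ≥ 1`):  `A^{*1} = smd A` and
`A^{*(n+1)} = smd (A^{*n} * A^{*1})`. -/
def starPow (A : Set D) : ℕ → Set D
  | 0 => ∅
  | 1 => smdClosure D A
  | (n + 2) => smdClosure D (starSets D (starPow A (n + 1)) (smdClosure D A))

variable {D}

/-- `M` is `A`-finitely generated. -/
def IsRelFinitelyGenerated (A : Set D) (M : Dᵒᵖ ⥤ ModuleCat.{v} R) : Prop :=
  ∃ (A₀ : D) (_ : A₀ ∈ A) (α : (linearYoneda R D).obj A₀ ⟶ M),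
    ∀ X ∈ A, Function.Surjective (α.app (op X))

/-- The kernel of the natural transformation `β : D(-,D₀) → M` is `A`-finitely
generated. -/
def KernelIsRelFG (A : Set D) {M : Dᵒᵖ ⥤ ModuleCat.{v} R} {D₀ : D}
    (β : (linearYoneda R D).obj D₀ ⟶ M) : Prop :=
  ∃ (A₀ : D) (_ : A₀ ∈ A) (g : A₀ ⟶ D₀),
    (linearYoneda R D).map g ≫ β = 0 ∧
    ∀ X ∈ A, ∀ x : ((linearYoneda R D).obj D₀).obj (op X), β.app (op X) x = 0 →
      ∃ t : X ⟶ A₀, ((linearYoneda R D).map g).app (op X) t = x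

section Aux

variable {R}
variable {M : Dᵒᵖ ⥤ ModuleCat.{v} R}

/-- Evaluating a natural transformation out of a linear yoneda functor. -/
lemma app_eval {B : D} (α : (linearYoneda R D).obj B ⟶ M) {X X' : D} (e : X' ⟶ X) (f : X ⟶ B) :
    α.app (op X') (e ≫ f) = M.map e.op (α.app (op X) f) := by
  have h := congrArg (fun (φ : ((linearYoneda R D).obj B).obj (op X) ⟶ M.obj (op X')) =>
    φ f) (α.naturality e.op)
  exact h

/-- Surjectivity on a class extends to its summand closure. -/
lemma surj_smd {B : D} (α : (linearYoneda R D).obj B ⟶ M) {S : Set D}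
    (h : ∀ X ∈ S, Function.Surjective (α.app (op X))) :
    ∀ Y ∈ smdClosure D S, Function.Surjective (α.app (op Y)) := by
  rintro Y ⟨X, hX, s, r, hsr⟩ y
  obtain ⟨f, hf⟩ := h X hX (M.map r.op y)
  refine ⟨s ≫ f, ?_⟩
  rw [app_eval α s f, hf]
  show (M.map r.op ≫ M.map s.op) y = y
  rw [← M.map_comp, ← op_comp, hsr, op_id, CategoryTheory.Functor.map_id]
  rfl

/-- The summand closure of a `⟦1⟧`-stable class is stable under `⟦-1⟧`. -/
lemma smd_shift_neg {A : Set D} (hA1 : (fun X : D => X⟦(1 : ℤ)⟧) '' A = A) {Z : D}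
    (hZ : Z ∈ smdClosure D A) : Z⟦(-1 : ℤ)⟧ ∈ smdClosure D A := by
  obtain ⟨Z', hZ', s, r, hsr⟩ := hZ
  rw [← hA1] at hZ'
  obtain ⟨Z'', hZ'', hEq⟩ := hZ'
  dsimp at hEq
  subst hEq
  refine ⟨Z'', hZ'',
    (shiftFunctor D (-1 : ℤ)).map s ≫ (shiftFunctorCompIsoId D (1 : ℤ) (-1 : ℤ)
      (by norm_num)).hom.app Z'',
    (shiftFunctorCompIsoId D (1 : ℤ) (-1 : ℤ) (by norm_num)).inv.app Z'' ≫
      (shiftFunctor D (-1 : ℤ)).map r, ?_⟩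
  rw [Category.assoc, Iso.hom_inv_id_app_assoc, ← Functor.map_comp, hsr,
    CategoryTheory.Functor.map_id]

/-- The natural transformation `D(-,C) ⟶ M` associated to an element of `M C`. -/
def ofElem (M : Dᵒᵖ ⥤ ModuleCat.{v} R) [M.Additive] [M.Linear R] {C : D} (m : M.obj (op C)) :
    (linearYoneda R D).obj C ⟶ M where
  app X := ModuleCat.ofHom
    { toFun := fun f => M.map f.op m
      map_add' := fun f g => by
        change M.map (f + g).op m = M.map f.op m + M.map g.op m
        rw [op_add, M.map_add]
        rfl
      map_smul' := fun r f => by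
        change M.map (r • f).op m = r • M.map f.op m
        have : (r • f).op = r • f.op := rfl
        rw [this, M.map_smul]
        rfl }
  naturality X X' e := by
    ext f
    change M.map ((f : unop X ⟶ C).op ≫ e) m = M.map e (M.map (f : unop X ⟶ C).op m)
    rw [M.map_comp]
    rfl

lemma ofElem_app (M : Dᵒᵖ ⥤ ModuleCat.{v} R) [M.Additive] [M.Linear R] {C : D}
    (m : M.obj (op C)) {X : D} (f : X ⟶ C) :
    (ofElem M m).app (op X) f = M.map f.op m := rfl

end Aux

/-!
Statement 6.
If `M` is a cohomological contravariant functor, `A` a full subcategory with `A[1] = A`,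
`M` is `A`-finitely generated and the kernel of every natural transformation
`D(-,D₀) → M` is `A`-finitely generated, then `M` is `A^{*n}`-finitely generated for all
`n ≥ 1`.
-/
theorem relFG_starPow
    (M : Dᵒᵖ ⥤ ModuleCat.{v} R) [M.Additive] [M.Linear R]
    (hM : IsCohomological R M)
    (A : Set D) (hA1 : (fun X : D => X⟦(1 : ℤ)⟧) '' A = A)
    (hfg : IsRelFinitelyGenerated R A M)
    (hker : ∀ (D₀ : D) (β : (linearYoneda R D).obj D₀ ⟶ M), KernelIsRelFG R A β) :
    ∀ n : ℕ, 1 ≤ n → IsRelFinitelyGenerated R (starPow D A n) M := by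
  suffices key : ∀ n : ℕ, 1 ≤ n → ∃ (B : D) (_ : B ∈ starPow D A n)
      (α : (linearYoneda R D).obj B ⟶ M),
      (∀ X ∈ starPow D A n, Function.Surjective (α.app (op X))) ∧
      (∀ X ∈ smdClosure D A, Function.Surjective (α.app (op X))) by
    intro n hn
    obtain ⟨B, hB, α, h1, _⟩ := key n hn
    exact ⟨B, hB, α, h1⟩
  intro n hn
  induction n, hn using Nat.le_induction with
  | base =>
    obtain ⟨A₀, hA₀, α, hα⟩ := hfg
    have hA₀' : A₀ ∈ smdClosure D A := ⟨A₀, hA₀, 𝟙 _, 𝟙 _, Category.id_comp _⟩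
    exact ⟨A₀, hA₀', α, surj_smd α hα, surj_smd α hα⟩
  | succ n hn ih =>
    obtain ⟨B, hB, α, hsurjP, hsurjA⟩ := ih
    obtain ⟨A₀, hA₀, g, hg0, hk⟩ := hker B α
    -- the kernel property extends to the summand closure of `A`
    have hk' : ∀ X ∈ smdClosure D A, ∀ x : X ⟶ B, α.app (op X) x = 0 →
        ∃ t : X ⟶ A₀, t ≫ g = x := by
      rintro X ⟨X', hX', s, r, hsr⟩ x hx
      have h0 : α.app (op X') (r ≫ x) = 0 := by
        rw [app_eval α r x, hx, map_zero]
      obtain ⟨t', ht'⟩ := hk X' hX' (r ≫ x) h0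
      have ht'' : t' ≫ g = r ≫ x := ht'
      refine ⟨s ≫ t', ?_⟩
      rw [Category.assoc, ht'', ← Category.assoc, hsr, Category.id_comp]
    -- complete `g` to a triangle
    obtain ⟨C, p, w, hT₀⟩ := Pretriangulated.distinguished_cocone_triangle g
    set e : M.obj (op B) := α.app (op B) (𝟙 B) with he
    have hge : M.map g.op e = 0 := by
      have h1 : α.app (op A₀) g = 0 := by
        have := congrArg (fun (φ : (linearYoneda R D).obj A₀ ⟶ M) =>
          φ.app (op A₀) (𝟙 A₀)) hg0
        change α.app (op A₀) (𝟙 A₀ ≫ g) = (0 : M.obj (op A₀)) at this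
        simpa using this
      have h2 := app_eval α g (𝟙 B)
      rw [Category.comp_id] at h2
      rw [← he] at h2
      rw [← h2, h1]
    obtain ⟨m, hm⟩ : ∃ m : M.obj (op C), M.map p.op m = e := (hM _ hT₀ e).mp hge
    set β := ofElem M m with hβ
    have hβα : ∀ (X : D) (f : X ⟶ B), β.app (op X) (f ≫ p) = α.app (op X) f := by
      intro X f
      have h1 : β.app (op X) (f ≫ p) = M.map f.op (M.map p.op m) := by
        rw [hβ, ofElem_app, op_comp, M.map_comp]
        rfl
      have h2 := app_eval α f (𝟙 B)
      rw [Category.comp_id, ← he] at h2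
      rw [h1, hm, h2]
    -- the new generator lives in the next star power
    obtain ⟨k, rfl⟩ : ∃ k, n = k + 1 := ⟨n - 1, (Nat.succ_pred_eq_of_pos hn).symm⟩
    have hA₀1 : A₀⟦(1 : ℤ)⟧ ∈ A := by
      rw [← hA1]; exact ⟨A₀, hA₀, rfl⟩
    have hC : C ∈ starPow D A (k + 1 + 1) := by
      refine ⟨C, ⟨B, A₀⟦(1 : ℤ)⟧, hB, ⟨A₀⟦(1 : ℤ)⟧, hA₀1, 𝟙 _, 𝟙 _, Category.id_comp _⟩,
        p, w, _, rot_of_distTriang _ hT₀⟩, 𝟙 _, 𝟙 _, Category.id_comp _⟩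
    -- β is surjective wherever α was
    have hβsurjA : ∀ X ∈ smdClosure D A, Function.Surjective (β.app (op X)) := by
      intro X hX y
      obtain ⟨t, ht⟩ := hsurjA X hX y
      exact ⟨t ≫ p, by rw [hβα X t]; exact ht⟩
    -- the main diagram chase: surjectivity on `starPow (k+1) * smd A`
    have hchase : ∀ Y ∈ starSets D (starPow D A (k + 1)) (smdClosure D A),
        Function.Surjective (β.app (op Y)) := by
      rintro Y ⟨X, Z, hX, hZ, f, q, h, hT⟩ y
      set T := Pretriangulated.Triangle.mk f q h with hTdef
      obtain ⟨u, hu⟩ : ∃ u : X ⟶ B, α.app (op X) u = M.map f.op y :=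
        hsurjP X hX (M.map f.op y)
      have haf : T.invRotate.mor₁ ≫ f = 0 :=
        comp_distTriang_mor_zero₁₂ _ (inv_rot_of_distTriang _ hT)
      have hker0 : α.app (op T.invRotate.obj₁) (T.invRotate.mor₁ ≫ u) = 0 := by
        have hu' : α.app (op T.invRotate.obj₂) u = M.map f.op y := hu
        rw [app_eval α T.invRotate.mor₁ u, hu']
        have key : M.map (T.invRotate.mor₁ ≫ f).op y = 0 := by
          rw [haf]
          have hz0 : ((0 : T.invRotate.obj₁ ⟶ Y)).op = 0 := rfl
          rw [hz0, M.map_zero]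
          rfl
        exact (congrArg (fun φ : M.obj (op Y) ⟶ M.obj (op T.invRotate.obj₁) => φ y)
          (M.map_comp f.op T.invRotate.mor₁.op)).symm.trans key
      have hZneg : T.invRotate.obj₁ ∈ smdClosure D A := smd_shift_neg hA1 hZ
      obtain ⟨t₀, ht₀⟩ := hk' _ hZneg _ hker0
      have hobst : T.invRotate.mor₁ ≫ (u ≫ p) = 0 := by
        have hgp : g ≫ p = 0 := comp_distTriang_mor_zero₁₂ _ hT₀
        calc T.invRotate.mor₁ ≫ (u ≫ p) = (T.invRotate.mor₁ ≫ u) ≫ p :=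
              (Category.assoc _ _ _).symm
          _ = (t₀ ≫ g) ≫ p := (congrArg (· ≫ p) ht₀).symm
          _ = 0 := by rw [Category.assoc, hgp, comp_zero]
      obtain ⟨v₀, hv₀'⟩ : ∃ v₀ : Y ⟶ C, u ≫ p = f ≫ v₀ :=
        Pretriangulated.Triangle.yoneda_exact₂ _
          (inv_rot_of_distTriang _ hT) (u ≫ p) hobst
      have hdiff : M.map f.op (y - β.app (op Y) v₀) = 0 := by
        rw [map_sub]
        have h3 : M.map f.op (β.app (op Y) v₀) = β.app (op X) (f ≫ v₀) :=
          (app_eval β f v₀).symm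
        rw [h3, ← hv₀', hβα X u, hu, sub_self]
      obtain ⟨z, hz⟩ : ∃ z : M.obj (op Z), M.map q.op z = y - β.app (op Y) v₀ :=
        (hM _ hT (y - β.app (op Y) v₀)).mp hdiff
      obtain ⟨t, ht⟩ : ∃ t : Z ⟶ C, β.app (op Z) t = z := hβsurjA Z hZ z
      refine ⟨v₀ + q ≫ t, ?_⟩
      refine (map_add (β.app (op Y)).hom v₀ (q ≫ t)).trans ?_
      refine (congrArg (fun w => β.app (op Y) v₀ + w) (app_eval β q t)).trans ?_
      rw [ht, hz]
      abel
    have hβsurjP2 : ∀ X ∈ starPow D A (k + 1 + 1), Function.Surjective (β.app (op X)) :=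
      surj_smd β hchase
    exact ⟨C, hC, β, hβsurjP2, hβsurjA⟩

end Paper
end
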